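/- arXiv:1806.09426 — 2 statements merged into one kernel-verified Lean document; each statement's English description precedes it below -/
import Mathlib

section
/- Given an ε-approximate Nash equilibrium (x, y) of a game (R, C) with payoffs in [0,1], the strategy profile (x', y') obtained by removing the probability mass from pure strategies outside √ε-BR₁(y) (respectively √ε-BR₂(x)) and redistributing it uniformly over √ε-BR₁(y) (resp. √ε-BR₂(x)) is a 3√ε-well-supported Nash equilibrium, and satisfies supp(x') ⊆ √ε-BR₁(y), supp(y') ⊆ √ε-BR₂(x). -/
open Finset Classical

def InSimplex {n : ℕ} (x : Fin n → ℝ) : Prop :=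
  (∀ i, 0 ≤ x i) ∧ ∑ i, x i = 1

def IsApproxNE {n : ℕ} (R C : Matrix (Fin n) (Fin n) ℝ) (ε : ℝ)
    (x y : Fin n → ℝ) : Prop :=
  (∀ i, ∑ j, R i j * y j - ε ≤ ∑ i, ∑ j, x i * R i j * y j) ∧
  (∀ j, ∑ i, x i * C i j - ε ≤ ∑ i, ∑ j, x i * C i j * y j)

def IsWNE {n : ℕ} (R C : Matrix (Fin n) (Fin n) ℝ) (ε : ℝ)
    (x y : Fin n → ℝ) : Prop :=
  (∀ i, 0 < x i → ∀ k, ∑ j, R k j * y j - ε ≤ ∑ j, R i j * y j) ∧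
  (∀ j, 0 < y j → ∀ k, ∑ i, x i * C i k - ε ≤ ∑ i, x i * C i j)

def InBR1 {n : ℕ} (R : Matrix (Fin n) (Fin n) ℝ) (δ : ℝ) (y : Fin n → ℝ)
    (i : Fin n) : Prop :=
  ∀ k, ∑ j, R k j * y j - δ ≤ ∑ j, R i j * y j

def InBR2 {n : ℕ} (C : Matrix (Fin n) (Fin n) ℝ) (δ : ℝ) (x : Fin n → ℝ)
    (j : Fin n) : Prop :=
  ∀ k, ∑ i, x i * C i k - δ ≤ ∑ i, x i * C i j

section aux
variable {n : ℕ}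

lemma exists_br (hn : 0 < n) (u : Fin n → ℝ) :
    ∃ i, ∀ k, u k ≤ u i := by
  have hne : (univ : Finset (Fin n)).Nonempty := by
    have : Nonempty (Fin n) := ⟨⟨0, hn⟩⟩
    exact univ_nonempty
  obtain ⟨i, _, hi⟩ := Finset.exists_max_image univ u hne
  exact ⟨i, fun k => hi k (mem_univ k)⟩

lemma mass_bound (hn : 0 < n) (ε : ℝ) (hε : 0 ≤ ε)
    (x u : Fin n → ℝ) (hx : InSimplex x)
    (hne : ∀ i, u i - ε ≤ ∑ i, x i * u i)
    (P : Fin n → Prop) (hP : ∀ i, P i ↔ ∀ k, u k - Real.sqrt ε ≤ u i) :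
    ∑ i ∈ univ.filter (fun i => ¬ P i), x i ≤ Real.sqrt ε := by
  obtain ⟨m, hm⟩ := exists_br hn u
  have hsub : ∑ i, x i * (u m - u i) ≤ ε := by
    have h2 : ∑ i, x i * (u m - u i) = u m - ∑ i, x i * u i := by
      simp only [mul_sub]
      rw [Finset.sum_sub_distrib, ← Finset.sum_mul, hx.2, one_mul]
    linarith [hne m]
  have hterm : ∀ i ∈ (univ : Finset (Fin n)), 0 ≤ x i * (u m - u i) := fun i _ =>
    mul_nonneg (hx.1 i) (by linarith [hm i])
  have hgap : ∀ i ∈ univ.filter (fun i => ¬ P i), Real.sqrt ε < u m - u i := by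
    intro i hi
    rw [mem_filter] at hi
    have h1 : ¬ ∀ k, u k - Real.sqrt ε ≤ u i := fun hh => hi.2 ((hP i).mpr hh)
    push_neg at h1
    obtain ⟨k, hk⟩ := h1
    have := hm k
    linarith
  have hsum2 : (∑ i ∈ univ.filter (fun i => ¬ P i), x i) * Real.sqrt ε ≤ ε := by
    rw [Finset.sum_mul]
    calc ∑ i ∈ univ.filter (fun i => ¬ P i), x i * Real.sqrt ε
        ≤ ∑ i ∈ univ.filter (fun i => ¬ P i), x i * (u m - u i) :=
          Finset.sum_le_sum (fun i hi =>
            mul_le_mul_of_nonneg_left (le_of_lt (hgap i hi)) (hx.1 i))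
      _ ≤ ∑ i, x i * (u m - u i) :=
          Finset.sum_le_sum_of_subset_of_nonneg (filter_subset _ _)
            (fun i hi _ => hterm i hi)
      _ ≤ ε := hsub
  rcases eq_or_lt_of_le hε with h0 | h0
  · have hs0 : ∑ i, x i * (u m - u i) = 0 :=
      le_antisymm (by rw [← h0] at hsub; exact hsub) (Finset.sum_nonneg hterm)
    have hall := (Finset.sum_eq_zero_iff_of_nonneg hterm).mp hs0
    have : ∑ i ∈ univ.filter (fun i => ¬ P i), x i = 0 := by
      apply Finset.sum_eq_zero
      intro i hi
      have h1 : Real.sqrt ε < u m - u i := hgap i hi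
      have h2 : x i * (u m - u i) = 0 := hall i (mem_univ i)
      have h3 : 0 < u m - u i := lt_of_le_of_lt (Real.sqrt_nonneg ε) h1
      rcases mul_eq_zero.mp h2 with h | h
      · exact h
      · linarith
    rw [this]; exact Real.sqrt_nonneg ε
  · have hs : 0 < Real.sqrt ε := Real.sqrt_pos.mpr h0
    have := (le_div_iff₀ hs).mpr hsum2
    rwa [Real.div_sqrt] at this

lemma redis_simplex (x : Fin n → ℝ) (hx : InSimplex x) (P : Fin n → Prop)
    (hne : (univ.filter P).Nonempty) (x' : Fin n → ℝ)
    (hx'def : ∀ i, x' i = if P i then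
      x i + (∑ j ∈ univ.filter (fun j => ¬ P j), x j) / (univ.filter P).card
      else 0) :
    InSimplex x' := by
  set T := ∑ j ∈ univ.filter (fun j => ¬ P j), x j with hT
  have hT0 : 0 ≤ T := Finset.sum_nonneg (fun j _ => hx.1 j)
  have hc : (0:ℝ) < (univ.filter P).card := by
    exact_mod_cast Finset.card_pos.mpr hne
  constructor
  · intro i
    rw [hx'def i]
    split
    · have : 0 ≤ T / (univ.filter P).card := div_nonneg hT0 (le_of_lt hc)
      linarith [hx.1 i]
    · exact le_refl 0
  · have hsplit := Finset.sum_filter_add_sum_filter_not univ P x'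
    have h1 : ∑ i ∈ univ.filter P, x' i
        = ∑ i ∈ univ.filter P, (x i + T / (univ.filter P).card) := by
      apply Finset.sum_congr rfl
      intro i hi
      rw [mem_filter] at hi
      rw [hx'def i, if_pos hi.2]
    have h2 : ∑ i ∈ univ.filter (fun i => ¬ P i), x' i = 0 := by
      apply Finset.sum_eq_zero
      intro i hi
      rw [mem_filter] at hi
      rw [hx'def i, if_neg hi.2]
    have h3 : ∑ i ∈ univ.filter P, (x i + T / (univ.filter P).card)
        = (∑ i ∈ univ.filter P, x i) + T := by
      rw [Finset.sum_add_distrib, Finset.sum_const, nsmul_eq_mul,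
        mul_div_cancel₀ _ (ne_of_gt hc)]
    have h4 : (∑ i ∈ univ.filter P, x i) + T = 1 := by
      rw [hT, Finset.sum_filter_add_sum_filter_not univ P x]
      exact hx.2
    rw [← hsplit, h1, h2, h3, add_zero, h4]

lemma perturb_bounds (x : Fin n → ℝ) (hx : InSimplex x) (P : Fin n → Prop)
    (hne : (univ.filter P).Nonempty) (x' : Fin n → ℝ)
    (hx'def : ∀ i, x' i = if P i then
      x i + (∑ j ∈ univ.filter (fun j => ¬ P j), x j) / (univ.filter P).card
      else 0)
    (v : Fin n → ℝ) (hv0 : ∀ i, 0 ≤ v i) (hv1 : ∀ i, v i ≤ 1) :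
    (∑ i, x i * v i) - (∑ j ∈ univ.filter (fun j => ¬ P j), x j)
      ≤ ∑ i, x' i * v i ∧
    ∑ i, x' i * v i
      ≤ (∑ i, x i * v i) + (∑ j ∈ univ.filter (fun j => ¬ P j), x j) := by
  set T := ∑ j ∈ univ.filter (fun j => ¬ P j), x j with hT
  have hT0 : 0 ≤ T := Finset.sum_nonneg (fun j _ => hx.1 j)
  have hc : (0:ℝ) < (univ.filter P).card := by
    exact_mod_cast Finset.card_pos.mpr hne
  have hexp : ∑ i, x' i * v i
      = (∑ i ∈ univ.filter P, x i * v i)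
        + (T / (univ.filter P).card) * ∑ i ∈ univ.filter P, v i := by
    rw [← Finset.sum_filter_add_sum_filter_not univ P (fun i => x' i * v i)]
    have h2 : ∑ i ∈ univ.filter (fun i => ¬ P i), x' i * v i = 0 := by
      apply Finset.sum_eq_zero
      intro i hi
      rw [mem_filter] at hi
      rw [hx'def i, if_neg hi.2, zero_mul]
    rw [h2, add_zero, Finset.mul_sum, ← Finset.sum_add_distrib]
    apply Finset.sum_congr rfl
    intro i hi
    rw [mem_filter] at hi
    rw [hx'def i, if_pos hi.2]
    ring
  have hxsplit : ∑ i, x i * v i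
      = (∑ i ∈ univ.filter P, x i * v i)
        + ∑ i ∈ univ.filter (fun i => ¬ P i), x i * v i :=
    (Finset.sum_filter_add_sum_filter_not univ P _).symm
  have hb1 : 0 ≤ ∑ i ∈ univ.filter (fun i => ¬ P i), x i * v i :=
    Finset.sum_nonneg (fun i _ => mul_nonneg (hx.1 i) (hv0 i))
  have hb2 : ∑ i ∈ univ.filter (fun i => ¬ P i), x i * v i ≤ T := by
    rw [hT]
    apply Finset.sum_le_sum
    intro i _
    calc x i * v i ≤ x i * 1 := mul_le_mul_of_nonneg_left (hv1 i) (hx.1 i)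
      _ = x i := mul_one _
  have hb3 : 0 ≤ (T / (univ.filter P).card) * ∑ i ∈ univ.filter P, v i :=
    mul_nonneg (div_nonneg hT0 (le_of_lt hc))
      (Finset.sum_nonneg (fun i _ => hv0 i))
  have hb4 : (T / (univ.filter P).card) * ∑ i ∈ univ.filter P, v i ≤ T := by
    have hsle : ∑ i ∈ univ.filter P, v i ≤ (univ.filter P).card := by
      calc ∑ i ∈ univ.filter P, v i ≤ ∑ i ∈ univ.filter P, (1:ℝ) :=
            Finset.sum_le_sum (fun i _ => hv1 i)
        _ = (univ.filter P).card := by rw [Finset.sum_const, nsmul_eq_mul, mul_one]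
    calc (T / (univ.filter P).card) * ∑ i ∈ univ.filter P, v i
        ≤ (T / (univ.filter P).card) * (univ.filter P).card :=
          mul_le_mul_of_nonneg_left hsle (div_nonneg hT0 (le_of_lt hc))
      _ = T := div_mul_cancel₀ _ (ne_of_gt hc)
  constructor
  · rw [hexp, hxsplit]; linarith
  · rw [hexp, hxsplit]; linarith

end aux

/-- redistributing the mass placed outside the √ε-best-response
sets uniformly over those sets turns an ε-approximate NE into a 3√ε-WNE,
supported inside the √ε-best-response sets. -/
theorem approxNE_to_wne {n : ℕ} (hn : 0 < n)
    (R C : Matrix (Fin n) (Fin n) ℝ) (ε : ℝ) (hε : 0 ≤ ε)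
    (hR : ∀ i j, R i j ∈ Set.Icc (0:ℝ) 1) (hC : ∀ i j, C i j ∈ Set.Icc (0:ℝ) 1)
    (x y : Fin n → ℝ) (hx : InSimplex x) (hy : InSimplex y)
    (h : IsApproxNE R C ε x y)
    (x' y' : Fin n → ℝ)
    (hx' : ∀ i, x' i =
      if InBR1 R (Real.sqrt ε) y i then
        x i + (∑ j ∈ univ.filter (fun j => ¬ InBR1 R (Real.sqrt ε) y j), x j) /
          (univ.filter (InBR1 R (Real.sqrt ε) y)).card
      else 0)
    (hy' : ∀ j, y' j =
      if InBR2 C (Real.sqrt ε) x j then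
        y j + (∑ i ∈ univ.filter (fun i => ¬ InBR2 C (Real.sqrt ε) x i), y i) /
          (univ.filter (InBR2 C (Real.sqrt ε) x)).card
      else 0) :
    InSimplex x' ∧ InSimplex y' ∧
    IsWNE R C (3 * Real.sqrt ε) x' y' ∧
    (∀ i, 0 < x' i → InBR1 R (Real.sqrt ε) y i) ∧
    (∀ j, 0 < y' j → InBR2 C (Real.sqrt ε) x j) := by
  set δ := Real.sqrt ε with hδ
  have hδ0 : 0 ≤ δ := Real.sqrt_nonneg ε
  -- nonemptiness of BR sets
  obtain ⟨m1, hm1⟩ := exists_br hn (fun i => ∑ j, R i j * y j)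
  have hm1' : InBR1 R δ y m1 := fun k => by
    have := hm1 k; beta_reduce at this; linarith
  have hne1 : (univ.filter (InBR1 R δ y)).Nonempty :=
    ⟨m1, mem_filter.mpr ⟨mem_univ m1, hm1'⟩⟩
  obtain ⟨m2, hm2⟩ := exists_br hn (fun j => ∑ i, x i * C i j)
  have hm2' : InBR2 C δ x m2 := fun k => by
    have := hm2 k; beta_reduce at this; linarith
  have hne2 : (univ.filter (InBR2 C δ x)).Nonempty :=
    ⟨m2, mem_filter.mpr ⟨mem_univ m2, hm2'⟩⟩
  -- rewrite NE payoffs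
  have hA : ∀ i, (fun i => ∑ j, R i j * y j) i - ε
      ≤ ∑ i, x i * (fun i => ∑ j, R i j * y j) i := by
    intro i
    have hrw : ∑ i, ∑ j, x i * R i j * y j
        = ∑ i, x i * (∑ j, R i j * y j) := by
      refine Finset.sum_congr rfl fun i _ => ?_
      rw [Finset.mul_sum]
      exact Finset.sum_congr rfl fun j _ => by ring
    have := h.1 i
    rw [hrw] at this
    exact this
  have hB : ∀ j, (fun j => ∑ i, x i * C i j) j - ε
      ≤ ∑ j, y j * (fun j => ∑ i, x i * C i j) j := by
    intro j
    have hrw : ∑ i, ∑ j, x i * C i j * y j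
        = ∑ j, y j * (∑ i, x i * C i j) := by
      rw [Finset.sum_comm]
      refine Finset.sum_congr rfl fun j _ => ?_
      rw [Finset.mul_sum]
      exact Finset.sum_congr rfl fun i _ => by ring
    have := h.2 j
    rw [hrw] at this
    exact this
  -- mass bounds
  have hq1 : ∑ i ∈ univ.filter (fun i => ¬ InBR1 R δ y i), x i ≤ δ :=
    mass_bound hn ε hε x _ hx hA (InBR1 R δ y) (fun i => Iff.rfl)
  have hq2 : ∑ j ∈ univ.filter (fun j => ¬ InBR2 C δ x j), y j ≤ δ :=
    mass_bound hn ε hε y _ hy hB (InBR2 C δ x) (fun j => Iff.rfl)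
  -- simplices
  have hxs : InSimplex x' := redis_simplex x hx (InBR1 R δ y) hne1 x' hx'
  have hys : InSimplex y' := redis_simplex y hy (InBR2 C δ x) hne2 y' hy'
  -- support conditions
  have hsup1 : ∀ i, 0 < x' i → InBR1 R δ y i := by
    intro i hi
    by_contra hni
    rw [hx' i, if_neg hni] at hi
    exact lt_irrefl 0 hi
  have hsup2 : ∀ j, 0 < y' j → InBR2 C δ x j := by
    intro j hj
    by_contra hnj
    rw [hy' j, if_neg hnj] at hj
    exact lt_irrefl 0 hj
  refine ⟨hxs, hys, ⟨?_, ?_⟩, hsup1, hsup2⟩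
  · -- row player WNE condition
    intro i hi k
    have hiP := hsup1 i hi
    have hik := hiP k
    have pbk := perturb_bounds y hy (InBR2 C δ x) hne2 y' hy'
      (fun j => R k j) (fun j => (hR k j).1) (fun j => (hR k j).2)
    have pbi := perturb_bounds y hy (InBR2 C δ x) hne2 y' hy'
      (fun j => R i j) (fun j => (hR i j).1) (fun j => (hR i j).2)
    have e1 : ∑ j, R k j * y' j = ∑ j, y' j * R k j :=
      Finset.sum_congr rfl fun j _ => mul_comm _ _
    have e2 : ∑ j, R i j * y' j = ∑ j, y' j * R i j :=
      Finset.sum_congr rfl fun j _ => mul_comm _ _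
    have e3 : ∑ j, R k j * y j = ∑ j, y j * R k j :=
      Finset.sum_congr rfl fun j _ => mul_comm _ _
    have e4 : ∑ j, R i j * y j = ∑ j, y j * R i j :=
      Finset.sum_congr rfl fun j _ => mul_comm _ _
    rw [e1, e2]
    have h1 := pbk.2
    have h2 := pbi.1
    beta_reduce at h1 h2
    linarith
  · -- column player WNE condition
    intro j hj k
    have hjP := hsup2 j hj
    have hjk := hjP k
    have pbk := perturb_bounds x hx (InBR1 R δ y) hne1 x' hx'
      (fun i => C i k) (fun i => (hC i k).1) (fun i => (hC i k).2)
    have pbj := perturb_bounds x hx (InBR1 R δ y) hne1 x' hx'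
      (fun i => C i j) (fun i => (hC i j).1) (fun i => (hC i j).2)
    have h1 := pbk.2
    have h2 := pbj.1
    beta_reduce at h1 h2
    linarith
end

section
/- If a graph G on n vertices has an independent set S of size k, then in the (2n+1)×(2n+1) game (R, C) constructed from G (with γ = 1/2), the symmetric profile (x, x) with x = (u_{n,S}, 0_{n+1}) is a Nash equilibrium in which both players receive payoff 1 + 1/(2k). -/
open Finset Matrix

/-- The (2n+1)-element strategy set: n vertex strategies, n auxiliary
strategies, and one final strategy. -/
abbrev Strat (n : ℕ) := Fin n ⊕ (Fin n ⊕ Unit)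

/-- The row-payoff matrix of the Gilboa–Zemel-style game built from a graph
with adjacency matrix E, with γ = 1/2, blocks A = 1 − E + γI, B = −M·I,
B' = (k+γ)·I, last column −1, last row 1 + γ/k, bottom-right entry 1. -/
noncomputable def Rmat (n k : ℕ) (E : Matrix (Fin n) (Fin n) ℝ) (M : ℝ) :
    Matrix (Strat n) (Strat n) ℝ := fun i j =>
  match i, j with
  | .inl u, .inl v => 1 - E u v + (1/2) * (if u = v then 1 else 0)
  | .inl u, .inr (.inl v) => -M * (if u = v then 1 else 0)
  | .inl _, .inr (.inr _) => -1
  | .inr (.inl u), .inl v => ((k : ℝ) + 1/2) * (if u = v then 1 else 0)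
  | .inr (.inl _), .inr (.inl _) => 0
  | .inr (.inl _), .inr (.inr _) => -1
  | .inr (.inr _), .inl _ => 1 + (1/2) / (k : ℝ)
  | .inr (.inr _), .inr (.inl _) => 1 + (1/2) / (k : ℝ)
  | .inr (.inr _), .inr (.inr _) => 1

/-- The strategy u_{n,S} padded with zeros: mass 1/k on each vertex of S. -/
noncomputable def xS (n k : ℕ) (S : Finset (Fin n)) : Strat n → ℝ := fun i =>
  match i with
  | .inl u => if u ∈ S then 1 / (k : ℝ) else 0
  | .inr _ => 0

/-- if G has an independent set S of size k, then (x, x) with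
x = (u_{n,S}, 0) is a Nash equilibrium of the symmetric game (R, Rᵀ), and both
players receive payoff 1 + 1/(2k). -/
theorem independentSet_gives_NE {n k : ℕ} (hk : 0 < k)
    (E : Matrix (Fin n) (Fin n) ℝ) (M : ℝ)
    (hE01 : ∀ u v, E u v = 0 ∨ E u v = 1) (hdiag : ∀ u, E u u = 0)
    (S : Finset (Fin n)) (hcard : S.card = k)
    (hind : ∀ u ∈ S, ∀ v ∈ S, E u v = 0) :
    ((∑ i, ∑ j, xS n k S i * Rmat n k E M i j * xS n k S j) = 1 + 1 / (2 * k)) ∧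
    (∀ i, (∑ j, Rmat n k E M i j * xS n k S j)
        ≤ ∑ i, ∑ j, xS n k S i * Rmat n k E M i j * xS n k S j) ∧
    (∀ j, (∑ i, xS n k S i * (Rmat n k E M)ᵀ i j)
        ≤ ∑ i, ∑ j, xS n k S i * (Rmat n k E M)ᵀ i j * xS n k S j) := by
  have kpos : (0:ℝ) < (k:ℝ) := by exact_mod_cast hk
  have kne : (k:ℝ) ≠ 0 := ne_of_gt kpos
  -- the payoff of any pure row i against x
  have sumS : ∀ i, (∑ j, Rmat n k E M i j * xS n k S j)
      = (∑ v ∈ S, Rmat n k E M i (Sum.inl v)) * (1/(k:ℝ)) := by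
    intro i
    rw [Fintype.sum_sum_type, Fintype.sum_sum_type]
    have h0 : ∀ j : Fin n ⊕ Unit, xS n k S (Sum.inr j) = 0 := fun j => rfl
    simp only [h0, mul_zero, Finset.sum_const_zero, add_zero]
    have h1 : ∀ v : Fin n, xS n k S (Sum.inl v) = if v ∈ S then 1/(k:ℝ) else 0 :=
      fun v => rfl
    simp only [h1, mul_ite, mul_zero]
    rw [Finset.sum_ite_mem, Finset.univ_inter, Finset.sum_mul]
  -- values of the inner sums
  have hAval : ∀ u, (∑ v ∈ S, Rmat n k E M (Sum.inl u) (Sum.inl v))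
      = (k:ℝ) - (∑ v ∈ S, E u v) + (if u ∈ S then (1/2:ℝ) else 0) := by
    intro u
    have : ∀ v ∈ S, Rmat n k E M (Sum.inl u) (Sum.inl v)
        = (1 - E u v) + (if u = v then (1/2:ℝ) else 0) := by
      intro v _
      show 1 - E u v + (1/2) * (if u = v then 1 else 0)
          = (1 - E u v) + (if u = v then (1/2:ℝ) else 0)
      by_cases h : u = v <;> simp [h]
    rw [Finset.sum_congr rfl this, Finset.sum_add_distrib, Finset.sum_sub_distrib,
      Finset.sum_ite_eq S u (fun _ => (1/2:ℝ))]
    simp [hcard]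
  have hBval : ∀ u, (∑ v ∈ S, Rmat n k E M (Sum.inr (Sum.inl u)) (Sum.inl v))
      = (if u ∈ S then (k:ℝ) + 1/2 else 0) := by
    intro u
    have : ∀ v ∈ S, Rmat n k E M (Sum.inr (Sum.inl u)) (Sum.inl v)
        = (if u = v then ((k:ℝ) + 1/2) else 0) := by
      intro v _
      show ((k : ℝ) + 1/2) * (if u = v then 1 else 0) = _
      by_cases h : u = v <;> simp [h]
    rw [Finset.sum_congr rfl this, Finset.sum_ite_eq S u (fun _ => ((k:ℝ)+1/2))]
  have hCval : ∀ t : Unit, (∑ v ∈ S, Rmat n k E M (Sum.inr (Sum.inr t)) (Sum.inl v))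
      = (k:ℝ) + 1/2 := by
    intro t
    have : ∀ v ∈ S, Rmat n k E M (Sum.inr (Sum.inr t)) (Sum.inl v)
        = 1 + (1/2)/(k:ℝ) := fun v _ => rfl
    rw [Finset.sum_congr rfl this, Finset.sum_const, hcard, nsmul_eq_mul]
    field_simp
  -- upper bound for every row
  have hub : ∀ i, (∑ v ∈ S, Rmat n k E M i (Sum.inl v)) ≤ (k:ℝ) + 1/2 := by
    intro i
    match i with
    | .inl u =>
      rw [hAval u]
      have hE : 0 ≤ ∑ v ∈ S, E u v :=
        Finset.sum_nonneg fun v _ => by rcases hE01 u v with h | h <;> simp [h]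
      by_cases h : u ∈ S <;> simp [h] <;> linarith
    | .inr (.inl u) =>
      rw [hBval u]
      by_cases h : u ∈ S <;> simp [h] <;> positivity
    | .inr (.inr t) => rw [hCval t]
  -- for u ∈ S the row attains exactly k + 1/2
  have heq : ∀ u ∈ S, (∑ v ∈ S, Rmat n k E M (Sum.inl u) (Sum.inl v)) = (k:ℝ) + 1/2 := by
    intro u hu
    rw [hAval u]
    have : ∑ v ∈ S, E u v = 0 := Finset.sum_eq_zero fun v hv => hind u hu v hv
    simp [hu, this]
  -- the equilibrium value
  have hval : (∑ i, ∑ j, xS n k S i * Rmat n k E M i j * xS n k S j) = 1 + 1/(2*(k:ℝ)) := by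
    have : ∀ i, (∑ j, xS n k S i * Rmat n k E M i j * xS n k S j)
        = xS n k S i * (∑ j, Rmat n k E M i j * xS n k S j) := by
      intro i; rw [Finset.mul_sum]; exact Finset.sum_congr rfl fun j _ => by ring
    rw [Finset.sum_congr rfl fun i _ => this i]
    rw [Fintype.sum_sum_type, Fintype.sum_sum_type]
    have h0 : ∀ j : Fin n ⊕ Unit, xS n k S (Sum.inr j) = 0 := fun j => rfl
    simp only [h0, zero_mul, Finset.sum_const_zero, add_zero]
    have h1 : ∀ v : Fin n, xS n k S (Sum.inl v) = if v ∈ S then 1/(k:ℝ) else 0 :=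
      fun v => rfl
    simp only [h1, ite_mul, zero_mul]
    rw [Finset.sum_ite_mem, Finset.univ_inter]
    have : ∀ u ∈ S, (1/(k:ℝ)) * (∑ j, Rmat n k E M (Sum.inl u) j * xS n k S j)
        = (1/(k:ℝ)) * (((k:ℝ) + 1/2) * (1/(k:ℝ))) := by
      intro u hu
      rw [sumS, heq u hu]
    rw [Finset.sum_congr rfl this, Finset.sum_const, hcard, nsmul_eq_mul]
    field_simp
  refine ⟨hval, ?_, ?_⟩
  · intro i
    rw [hval, sumS]
    have : ((k:ℝ) + 1/2) * (1/(k:ℝ)) = 1 + 1/(2*(k:ℝ)) := by field_simp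
    rw [← this]
    have hq : (0:ℝ) < 1/(k:ℝ) := by positivity
    exact mul_le_mul_of_nonneg_right (hub i) (le_of_lt hq)
  · intro j
    -- rewrite transposed sums as the untransposed ones
    have hT1 : ∀ j, (∑ i, xS n k S i * (Rmat n k E M)ᵀ i j)
        = ∑ i, Rmat n k E M j i * xS n k S i := by
      intro j
      exact Finset.sum_congr rfl fun i _ => by rw [Matrix.transpose_apply]; ring
    have hT2 : (∑ i, ∑ j, xS n k S i * (Rmat n k E M)ᵀ i j * xS n k S j)
        = ∑ i, ∑ j, xS n k S i * Rmat n k E M i j * xS n k S j := by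
      rw [Finset.sum_comm]
      refine Finset.sum_congr rfl fun a _ => Finset.sum_congr rfl fun b _ => ?_
      rw [Matrix.transpose_apply]; ring
    rw [hT1, hT2, hval, sumS]
    have : ((k:ℝ) + 1/2) * (1/(k:ℝ)) = 1 + 1/(2*(k:ℝ)) := by field_simp
    rw [← this]
    have hq : (0:ℝ) < 1/(k:ℝ) := by positivity
    exact mul_le_mul_of_nonneg_right (hub j) (le_of_lt hq)
end
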